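/- Projections of attractor states need not lie in attractors of the reduced network: for f̂(x₁,x₂,x₃) = (¬x₁¬x₂ ∨ ¬x₁¬x₃ ∨ x₂¬x₃, x₁¬x₂¬x₃ ∨ ¬x₁¬x₂x₃, x₁¬x₂ ∨ ¬x₁x₂), the state 011 lies in the unique attractor of the asynchronous dynamics of f̂, but its projection 01 onto the first two coordinates does not belong to any attractor of the reduction of f̂ obtained by eliminating the non-autoregulated variable x₃, which is f(x₁,x₂) = (x₁x₂ ∨ ¬x₁¬x₂, 0). -/
import Mathlib


/-- Asynchronous transition: flip one coordinate i where f disagrees with x. -/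
def step {n : ℕ} (f : (Fin n → Bool) → Fin n → Bool) (x y : Fin n → Bool) : Prop :=
  ∃ i : Fin n, f x i ≠ x i ∧ y = Function.update x i (!x i)

/-- Reachability: reflexive-transitive closure of the asynchronous step relation. -/
def reaches {n : ℕ} (f : (Fin n → Bool) → Fin n → Bool) :
    (Fin n → Bool) → (Fin n → Bool) → Prop :=
  Relation.ReflTransGen (step f)

/-- Trap set: no outgoing asynchronous transition. -/
def IsTrap {n : ℕ} (f : (Fin n → Bool) → Fin n → Bool) (B : Set (Fin n → Bool)) : Prop :=
  ∀ x ∈ B, ∀ y, step f x y → y ∈ B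

/-- Attractor: inclusion-minimal nonempty trap set. -/
def IsAttractor {n : ℕ} (f : (Fin n → Bool) → Fin n → Bool) (A : Set (Fin n → Bool)) : Prop :=
  A.Nonempty ∧ IsTrap f A ∧ ∀ B ⊆ A, B.Nonempty → IsTrap f B → B = A

/-- Subspace: the set of states fixing some coordinates to given constants. -/
def IsSubspace {n : ℕ} (T : Set (Fin n → Bool)) : Prop :=
  ∃ (I : Set (Fin n)) (v : Fin n → Bool), T = {x | ∀ i ∈ I, x i = v i}

/-- Trap space: a subspace that is a trap set. -/
def IsTrapSpace {n : ℕ} (f : (Fin n → Bool) → Fin n → Bool) (T : Set (Fin n → Bool)) : Prop :=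
  IsSubspace T ∧ IsTrap f T

/-- Minimal trap space: nonempty trap space minimal under inclusion. -/
def IsMinTrapSpace {n : ℕ} (f : (Fin n → Bool) → Fin n → Bool) (T : Set (Fin n → Bool)) : Prop :=
  T.Nonempty ∧ IsTrapSpace f T ∧
    ∀ T' ⊆ T, T'.Nonempty → IsTrapSpace f T' → T' = T

/-- The lifting map 𝒮(x) = (x, f_n(x,0)). -/
def liftS {n : ℕ} (f : (Fin (n+1) → Bool) → Fin (n+1) → Bool) (x : Fin n → Bool) :
    Fin (n+1) → Bool :=
  Fin.snoc x (f (Fin.snoc x false) (Fin.last n))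

/-- Reduction by elimination of the (non-autoregulated) last variable:
f̃_i(x) = f_i(𝒮(x)). -/
def reduced {n : ℕ} (f : (Fin (n+1) → Bool) → Fin (n+1) → Bool)
    (x : Fin n → Bool) (i : Fin n) : Bool :=
  f (liftS f x) i.castSucc

/-- Projection π onto the first n coordinates. -/
def proj {n : ℕ} (y : Fin (n+1) → Bool) : Fin n → Bool := Fin.init y

/-- f̂(x₁,x₂,x₃) = (¬x₁¬x₂ ∨ ¬x₁¬x₃ ∨ x₂¬x₃, x₁¬x₂¬x₃ ∨ ¬x₁¬x₂x₃, x₁¬x₂ ∨ ¬x₁x₂). -/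
def fhat (x : Fin 3 → Bool) : Fin 3 → Bool :=
  ![(!x 0 && !x 1) || (!x 0 && !x 2) || (x 1 && !x 2),
    (x 0 && !x 1 && !x 2) || (!x 0 && !x 1 && x 2),
    (x 0 && !x 1) || (!x 0 && x 1)]

/-- f(x₁,x₂) = (x₁x₂ ∨ ¬x₁¬x₂, 0), the reduction of f̂ by elimination of x₃. -/
def f18 (x : Fin 2 → Bool) : Fin 2 → Bool :=
  ![(x 0 && x 1) || (!x 0 && !x 1), false]

namespace Aux18

abbrev a000 : Fin 3 → Bool := ![false,false,false]
abbrev a001 : Fin 3 → Bool := ![false,false,true]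
abbrev a010 : Fin 3 → Bool := ![false,true,false]
abbrev a011 : Fin 3 → Bool := ![false,true,true]
abbrev a100 : Fin 3 → Bool := ![true,false,false]
abbrev a101 : Fin 3 → Bool := ![true,false,true]
abbrev a110 : Fin 3 → Bool := ![true,true,false]
abbrev a111 : Fin 3 → Bool := ![true,true,true]

def Aset : Set (Fin 3 → Bool) := {x | x ≠ a010 ∧ x ≠ a111}

lemma stepd {n : ℕ} (f : (Fin n → Bool) → Fin n → Bool) (x y : Fin n → Bool)
    (i : Fin n) (h1 : f x i ≠ x i) (h2 : y = Function.update x i (!x i)) :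
    step f x y := ⟨i, h1, h2⟩

lemma trap_reach {n : ℕ} {f : (Fin n → Bool) → Fin n → Bool} {B : Set (Fin n → Bool)}
    (hB : IsTrap f B) {x y : Fin n → Bool} (hx : x ∈ B) (h : reaches f x y) : y ∈ B := by
  induction h with
  | refl => exact hx
  | tail _ h2 ih => exact hB _ ih _ h2

-- single steps inside the attractor of fhat
lemma s000_100 : step fhat a000 a100 := stepd _ _ _ 0 (by decide) (by decide)
lemma s100_000 : step fhat a100 a000 := stepd _ _ _ 0 (by decide) (by decide)
lemma s100_110 : step fhat a100 a110 := stepd _ _ _ 1 (by decide) (by decide)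
lemma s100_101 : step fhat a100 a101 := stepd _ _ _ 2 (by decide) (by decide)
lemma s110_100 : step fhat a110 a100 := stepd _ _ _ 1 (by decide) (by decide)
lemma s101_001 : step fhat a101 a001 := stepd _ _ _ 0 (by decide) (by decide)
lemma s001_000 : step fhat a001 a000 := stepd _ _ _ 2 (by decide) (by decide)
lemma s001_011 : step fhat a001 a011 := stepd _ _ _ 1 (by decide) (by decide)
lemma s011_001 : step fhat a011 a001 := stepd _ _ _ 1 (by decide) (by decide)
-- steps from the two transient states
lemma s010_000 : step fhat a010 a000 := stepd _ _ _ 1 (by decide) (by decide)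
lemma s111_011 : step fhat a111 a011 := stepd _ _ _ 0 (by decide) (by decide)

lemma mem_cases : ∀ a : Fin 3 → Bool, (a ≠ a010 ∧ a ≠ a111) →
    a = a000 ∨ a = a100 ∨ a = a110 ∨ a = a101 ∨ a = a001 ∨ a = a011 := by decide

lemma all_cases : ∀ a : Fin 3 → Bool,
    (a ≠ a010 ∧ a ≠ a111) ∨ a = a010 ∨ a = a111 := by decide

lemma to000 : ∀ a ∈ Aset, reaches fhat a a000 := by
  intro a ha
  rcases mem_cases a ha with rfl | rfl | rfl | rfl | rfl | rfl
  · exact Relation.ReflTransGen.refl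
  · exact Relation.ReflTransGen.single s100_000
  · exact (Relation.ReflTransGen.single s110_100).trans
      (Relation.ReflTransGen.single s100_000)
  · exact (Relation.ReflTransGen.single s101_001).trans
      (Relation.ReflTransGen.single s001_000)
  · exact Relation.ReflTransGen.single s001_000
  · exact (Relation.ReflTransGen.single s011_001).trans
      (Relation.ReflTransGen.single s001_000)

lemma from000 : ∀ a ∈ Aset, reaches fhat a000 a := by
  intro a ha
  have h100 : reaches fhat a000 a100 := Relation.ReflTransGen.single s000_100
  have h101 : reaches fhat a000 a101 := h100.trans (Relation.ReflTransGen.single s100_101)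
  have h001 : reaches fhat a000 a001 := h101.trans (Relation.ReflTransGen.single s101_001)
  rcases mem_cases a ha with rfl | rfl | rfl | rfl | rfl | rfl
  · exact Relation.ReflTransGen.refl
  · exact h100
  · exact h100.trans (Relation.ReflTransGen.single s100_110)
  · exact h101
  · exact h001
  · exact h001.trans (Relation.ReflTransGen.single s001_011)

lemma reachA {a b : Fin 3 → Bool} (ha : a ∈ Aset) (hb : b ∈ Aset) :
    reaches fhat a b := (to000 a ha).trans (from000 b hb)

lemma core_trapA : ∀ (x : Fin 3 → Bool) (i : Fin 3),
    (x ≠ a010 ∧ x ≠ a111) → fhat x i ≠ x i →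
    (Function.update x i (!x i) ≠ a010 ∧ Function.update x i (!x i) ≠ a111) := by decide

lemma trapA : IsTrap fhat Aset := by
  rintro x hx y ⟨i, h1, rfl⟩
  exact core_trapA x i hx h1

lemma attrA : IsAttractor fhat Aset := by
  refine ⟨⟨a011, by decide, by decide⟩, trapA, ?_⟩
  intro B hsub hne htrapB
  obtain ⟨b, hb⟩ := hne
  refine Set.Subset.antisymm hsub (fun a ha => ?_)
  exact trap_reach htrapB hb (reachA (hsub hb) ha)

lemma uniqA : ∀ B, IsAttractor fhat B → B = Aset := by
  rintro B ⟨⟨b, hb⟩, htrapB, hminB⟩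
  -- find an element of Aset ∩ B
  have key : ∃ a, a ∈ Aset ∧ a ∈ B := by
    rcases all_cases b with hbA | rfl | rfl
    · exact ⟨b, hbA, hb⟩
    · exact ⟨a000, ⟨by decide, by decide⟩, htrapB _ hb _ s010_000⟩
    · exact ⟨a011, ⟨by decide, by decide⟩, htrapB _ hb _ s111_011⟩
  obtain ⟨a, haA, haB⟩ := key
  have hAB : Aset ⊆ B := fun a' ha' => trap_reach htrapB haB (reachA haA ha')
  exact (hminB Aset hAB ⟨a011, by decide, by decide⟩ trapA).symm

-- part 3 : f18
abbrev b00 : Fin 2 → Bool := ![false,false]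
abbrev b01 : Fin 2 → Bool := ![false,true]
abbrev b10 : Fin 2 → Bool := ![true,false]

lemma t01_00 : step f18 b01 b00 := stepd _ _ _ 1 (by decide) (by decide)
lemma t00_10 : step f18 b00 b10 := stepd _ _ _ 0 (by decide) (by decide)

lemma core_trapT : ∀ (x : Fin 2 → Bool) (i : Fin 2),
    (x = b00 ∨ x = b10) → f18 x i ≠ x i →
    (Function.update x i (!x i) = b00 ∨ Function.update x i (!x i) = b10) := by decide

lemma part3 : ∀ A, IsAttractor f18 A → (![false, true] : Fin 2 → Bool) ∉ A := by
  rintro A ⟨hne, htrap, hmin⟩ h01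
  have h00 : b00 ∈ A := htrap _ h01 _ t01_00
  have h10 : b10 ∈ A := htrap _ h00 _ t00_10
  have hT : ({b00, b10} : Set (Fin 2 → Bool)) = A := by
    refine hmin _ ?_ ⟨b00, Or.inl rfl⟩ ?_
    · rintro x (rfl | rfl) <;> assumption
    · rintro x hx y ⟨i, h1, rfl⟩
      have hx' : x = b00 ∨ x = b10 := hx
      exact core_trapT x i hx' h1
  rw [← hT] at h01
  have : b01 = b00 ∨ b01 = b10 := h01
  revert this; decide

end Aux18

theorem stmt18 :
    (∀ (x : Fin 2 → Bool) (i : Fin 2), reduced fhat x i = f18 x i) ∧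
    (∃ A, IsAttractor fhat A ∧ (∀ B, IsAttractor fhat B → B = A) ∧
      (![false, true, true] : Fin 3 → Bool) ∈ A) ∧
    (∀ A, IsAttractor f18 A → (![false, true] : Fin 2 → Bool) ∉ A) := by
  refine ⟨by decide, ⟨Aux18.Aset, Aux18.attrA, Aux18.uniqA, by decide, by decide⟩, Aux18.part3⟩
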